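/- For every finite abelian group G of order n ≥ 1, there exist subsets S₁, S₂ of G with |S₁| ≤ 2√n and |S₂| ≤ 2√n such that S₁ + S₂ = G. -/

import Mathlib

open Pointwise

/-- Converse of Lagrange's theorem for finite abelian groups. -/
lemma aux_exists_addSubgroup_card_eq : ∀ (d : ℕ) (G : Type*) [AddCommGroup G] [Finite G],
    d ∣ Nat.card G → ∃ H : AddSubgroup G, Nat.card H = d := by
  intro d
  induction d using Nat.strong_induction_on with
  | _ d ih =>
    intro G _ _ hd
    rcases eq_or_ne d 1 with rfl | hd1
    · exact ⟨⊥, by simp⟩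
    have hd0 : d ≠ 0 := by
      rintro rfl
      have h := Nat.card_pos (α := G)
      rw [Nat.zero_dvd.mp hd] at h
      exact absurd h (lt_irrefl 0)
    set p := d.minFac with hp
    have hpp : p.Prime := Nat.minFac_prime hd1
    haveI : Fact p.Prime := ⟨hpp⟩
    have hpd : p ∣ d := Nat.minFac_dvd d
    haveI : Fintype G := Fintype.ofFinite G
    have hcard : p ∣ Fintype.card G := by
      rw [← Nat.card_eq_fintype_card]; exact hpd.trans hd
    obtain ⟨x, hx⟩ := exists_prime_addOrderOf_dvd_card p hcard
    set P := AddSubgroup.zmultiples x with hP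
    have hPcard : Nat.card P = p := by rw [hP, Nat.card_zmultiples, hx]
    have hcardQ : Nat.card (G ⧸ P) * p = Nat.card G := by
      rw [← hPcard]; exact (AddSubgroup.card_eq_card_quotient_mul_card_addSubgroup P).symm
    have hdvd' : d / p ∣ Nat.card (G ⧸ P) := by
      apply Nat.dvd_of_mul_dvd_mul_right hpp.pos
      rw [Nat.div_mul_cancel hpd, hcardQ]; exact hd
    obtain ⟨H', hH'⟩ := ih (d / p) (Nat.div_lt_self (Nat.pos_of_ne_zero hd0) hpp.one_lt)
      (G ⧸ P) hdvd'
    refine ⟨H'.comap (QuotientAddGroup.mk' P), ?_⟩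
    have hsurj : Function.Surjective (QuotientAddGroup.mk' P) := QuotientAddGroup.mk'_surjective P
    have h1 : Nat.card (H'.comap (QuotientAddGroup.mk' P)) * (H'.comap (QuotientAddGroup.mk' P)).index
        = Nat.card G := AddSubgroup.card_mul_index _
    rw [AddSubgroup.index_comap_of_surjective _ hsurj] at h1
    have h2 : Nat.card H' * H'.index = Nat.card (G ⧸ P) := AddSubgroup.card_mul_index _
    have hindpos : 0 < H'.index := Nat.pos_of_ne_zero (AddSubgroup.index_ne_zero_of_finite)
    have : Nat.card (H'.comap (QuotientAddGroup.mk' P)) * H'.index = (d / p * p) * H'.index := by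
      rw [h1, ← hcardQ, ← h2, hH']; ring
    have h3 : Nat.card (H'.comap (QuotientAddGroup.mk' P)) = d / p * p :=
      Nat.eq_of_mul_eq_mul_right hindpos this
    rw [h3, Nat.div_mul_cancel hpd]

theorem stmt_4 {G : Type*} [AddCommGroup G] [Finite G] (n : ℕ)
    (hn : Nat.card G = n) (hn1 : 1 ≤ n) :
    ∃ S₁ S₂ : Set G,
      (S₁.ncard : ℝ) ≤ 2 * Real.sqrt n ∧
      (S₂.ncard : ℝ) ≤ 2 * Real.sqrt n ∧
      S₁ + S₂ = Set.univ := by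
  classical
  have hn0 : n ≠ 0 := by omega
  -- basic real facts about sqrt n
  have hSpos : 0 < Real.sqrt n := Real.sqrt_pos.mpr (by exact_mod_cast Nat.pos_of_ne_zero hn0)
  have hS1 : (1 : ℝ) ≤ Real.sqrt n := by
    rw [show (1:ℝ) = Real.sqrt 1 by rw [Real.sqrt_one]]
    exact Real.sqrt_le_sqrt (by exact_mod_cast hn1)
  rcases eq_or_lt_of_le hn1 with h1 | h2
  · -- n = 1
    refine ⟨Set.univ, Set.univ, ?_, ?_, ?_⟩
    · rw [Set.ncard_univ, hn, ← h1]; push_cast; rw [Real.sqrt_one]; norm_num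
    · rw [Set.ncard_univ, hn, ← h1]; push_cast; rw [Real.sqrt_one]; norm_num
    · apply Set.eq_univ_of_forall
      intro g
      exact ⟨g, trivial, 0, trivial, add_zero g⟩
  -- main case: n ≥ 2
  set s := Nat.sqrt n with hsdef
  have hs1 : 1 ≤ s := Nat.sqrt_pos.mpr (by omega)
  set D := n.divisors.filter (fun e => e ≤ s) with hD
  have hne : D.Nonempty := ⟨1, by simp [hD, Nat.mem_divisors, hn0, hs1]⟩
  set d := D.max' hne with hdd
  have hddvd : d ∣ n := (Nat.mem_divisors.mp (Finset.mem_filter.mp (D.max'_mem hne)).1).1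
  have hdle : d ≤ s := (Finset.mem_filter.mp (D.max'_mem hne)).2
  have hdmax : ∀ e, e ∣ n → e ≤ s → e ≤ d := fun e he1 he2 =>
    Finset.le_max' D e (by simp [hD, Nat.mem_divisors, he1, hn0, he2])
  have hd1 : 1 ≤ d := hdmax 1 (one_dvd n) hs1
  have hsn : s < n := Nat.sqrt_lt_self h2
  have hdn : d < n := lt_of_le_of_lt hdle hsn
  set m := n / d with hm
  have hmn : m * d = n := Nat.div_mul_cancel hddvd
  have hm1 : 1 < m := by
    rcases Nat.lt_or_ge m 2 with h | h
    · interval_cases m <;> omega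
    · exact h
  set p := m.minFac with hpdef
  have hpp : p.Prime := Nat.minFac_prime (by omega)
  have hp2 : 2 ≤ p := hpp.two_le
  have hpm : p ∣ m := Nat.minFac_dvd m
  have hdpn : d * p ∣ n := by
    rcases hpm with ⟨t, ht⟩
    exact ⟨t, by rw [← hmn, ht]; ring⟩
  have hsp : s < d * p := by
    by_contra hle
    push_neg at hle
    have h := hdmax (d * p) hdpn hle
    nlinarith
  -- subgroups K ≥ H with |K| = d*p, |H| = d
  obtain ⟨K, hK⟩ := aux_exists_addSubgroup_card_eq (d * p) G (by rw [hn]; exact hdpn)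
  obtain ⟨H, hH⟩ := aux_exists_addSubgroup_card_eq d K ⟨p, hK⟩
  -- quotient K ⧸ H has cardinality p
  have hQK : Nat.card (K ⧸ H) = p := by
    have h := AddSubgroup.card_eq_card_quotient_mul_card_addSubgroup H
    rw [hK, hH] at h
    have hdpos : 0 < d := hd1
    have : p * d = Nat.card (K ⧸ H) * d := by rw [mul_comm p d]; exact h
    exact (Nat.eq_of_mul_eq_mul_right hdpos this).symm
  -- an element x ∈ K \ H
  obtain ⟨x, hx⟩ : ∃ x : K, x ∉ H := by
    by_contra h
    push_neg at h
    have htop : H = ⊤ := (AddSubgroup.eq_top_iff' H).mpr h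
    rw [htop] at hH
    rw [Nat.card_eq_of_bijective _ (Function.bijective_id.comp (AddSubgroup.topEquiv (G := K)).bijective)] at hH
    rw [hK] at hH
    nlinarith
  set xb : K ⧸ H := QuotientAddGroup.mk x with hxb
  have hxb0 : xb ≠ 0 := fun h => hx ((QuotientAddGroup.eq_zero_iff x).mp h)
  have horder : addOrderOf xb = p := by
    have h1 : addOrderOf xb ∣ p := by rw [← hQK]; exact addOrderOf_dvd_natCard xb
    rcases (Nat.Prime.eq_one_or_self_of_dvd hpp _ h1) with h | h
    · exact absurd (AddMonoid.addOrderOf_eq_one_iff.mp h) hxb0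
    · exact h
  -- xb generates K ⧸ H
  have hgen : ∀ q : K ⧸ H, ∃ mm : ℕ, mm < p ∧ mm • xb = q := by
    intro q
    have htop : AddSubgroup.zmultiples xb = ⊤ := by
      apply AddSubgroup.eq_top_of_card_eq
      rw [Nat.card_zmultiples, horder, hQK]
    have hq : q ∈ AddSubgroup.zmultiples xb := htop ▸ AddSubgroup.mem_top q
    obtain ⟨z, hz⟩ := AddSubgroup.mem_zmultiples_iff.mp hq
    have hppos : (0:ℤ) < (p:ℤ) := by exact_mod_cast hpp.pos
    refine ⟨(z % (p:ℤ)).toNat, ?_, ?_⟩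
    · have h1 : z % (p:ℤ) < p := Int.emod_lt_of_pos z hppos
      omega
    · have h0 : ((z % (p:ℤ)).toNat : ℤ) = z % (p:ℤ) :=
        Int.toNat_of_nonneg (Int.emod_nonneg z (by omega))
      have hpxb : (p:ℤ) • xb = 0 := by
        rw [natCast_zsmul, ← horder]; exact addOrderOf_nsmul_eq_zero xb
      have : ((z % (p:ℤ)).toNat : ℤ) • xb = z • xb := by
        rw [h0]
        have hz' : z = z % (p:ℤ) + (p:ℤ) * (z / (p:ℤ)) := (Int.emod_add_mul_ediv z (p:ℤ)).symm
        calc (z % (p:ℤ)) • xb = (z % (p:ℤ)) • xb + (z / (p:ℤ)) • ((p:ℤ) • xb) := by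
              rw [hpxb, smul_zero, add_zero]
          _ = (z % (p:ℤ) + (p:ℤ) * (z / (p:ℤ))) • xb := by
              rw [add_zsmul, ← mul_zsmul, mul_comm ((p:ℤ)) (z / (p:ℤ))]
          _ = z • xb := by rw [← hz']
      rw [← natCast_zsmul, this, hz]
  -- parameters k and c
  set k := s / d + 1 with hkdef
  have hk1 : 1 ≤ k := Nat.succ_le_succ (Nat.zero_le _)
  set c := (p - 1) / k + 1 with hcdef
  -- covering property inside K
  have hcover : ∀ y : K, ∃ i < k, ∃ j < c, y - (i • x + j • (k • x)) ∈ H := by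
    intro y
    obtain ⟨mm, hmp, hmm⟩ := hgen (QuotientAddGroup.mk y)
    refine ⟨mm % k, Nat.mod_lt _ (Nat.succ_pos _), mm / k, ?_, ?_⟩
    · have h : mm / k ≤ (p - 1) / k := Nat.div_le_div_right (by omega)
      exact Nat.lt_succ_of_le h
    · rw [← QuotientAddGroup.eq_zero_iff]
      have hcomp : ((y - ((mm % k) • x + (mm / k) • (k • x)) : K) : K ⧸ H)
          = QuotientAddGroup.mk y - ((mm % k) • xb + (mm / k) • (k • xb)) := by
        simp only [QuotientAddGroup.mk_sub, QuotientAddGroup.mk_add, QuotientAddGroup.mk_nsmul, hxb]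
      rw [hcomp]
      have : (mm % k) • xb + (mm / k) • (k • xb) = mm • xb := by
        rw [← mul_nsmul, ← add_nsmul]
        congr 1
        exact Nat.mod_add_div mm k
      rw [this, hmm, sub_self]
  -- the sets
  set xG : G := ((x : K) : G) with hxG
  set HG := H.map K.subtype with hHG
  set T : Set G := Set.range (Quotient.out : G ⧸ K → G) with hT
  set S₁ : Set G := (HG : Set G) + (fun i : ℕ => i • xG) '' ↑(Finset.range k) with hS₁
  set S₂ : Set G := (fun j : ℕ => j • (k • xG)) '' ↑(Finset.range c) + T with hS₂
  -- cardinality of quotient G ⧸ K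
  set qq := Nat.card (G ⧸ K) with hqq
  have hqn : qq * (d * p) = n := by
    rw [hqq, ← hK, ← hn]
    exact (AddSubgroup.card_eq_card_quotient_mul_card_addSubgroup K).symm
  have hqq1 : 1 ≤ qq := by
    rcases Nat.eq_zero_or_pos qq with h | h
    · rw [h, zero_mul] at hqn; omega
    · exact h
  -- ncard bounds (natural numbers)
  have hHGcard : (HG : Set G).ncard = d := by
    rw [hHG, AddSubgroup.coe_map]
    rw [Set.ncard_image_of_injective _ (AddSubgroup.subtype_injective K)]
    rw [← Nat.card_coe_set_eq]
    exact hH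
  have hcard1 : S₁.ncard ≤ d * k := by
    rw [hS₁, ← Nat.card_coe_set_eq]
    calc Nat.card ((HG : Set G) + (fun i : ℕ => i • xG) '' ↑(Finset.range k) : Set G)
        ≤ Nat.card (HG : Set G) * Nat.card ((fun i : ℕ => i • xG) '' ↑(Finset.range k) : Set G) :=
          Set.natCard_add_le
      _ ≤ d * k := by
          rw [Nat.card_coe_set_eq, Nat.card_coe_set_eq, hHGcard]
          apply Nat.mul_le_mul_left
          calc ((fun i : ℕ => i • xG) '' ↑(Finset.range k)).ncard
              ≤ (↑(Finset.range k) : Set ℕ).ncard := Set.ncard_image_le (Finset.range k).finite_toSet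
            _ = k := by rw [Set.ncard_coe_finset, Finset.card_range]
  have hcard2 : S₂.ncard ≤ c * qq := by
    rw [hS₂, ← Nat.card_coe_set_eq]
    calc Nat.card ((fun j : ℕ => j • (k • xG)) '' ↑(Finset.range c) + T : Set G)
        ≤ Nat.card ((fun j : ℕ => j • (k • xG)) '' ↑(Finset.range c) : Set G) * Nat.card (T : Set G) :=
          Set.natCard_add_le
      _ ≤ c * qq := by
          rw [Nat.card_coe_set_eq, Nat.card_coe_set_eq]
          apply Nat.mul_le_mul
          · calc ((fun j : ℕ => j • (k • xG)) '' ↑(Finset.range c)).ncard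
                ≤ (↑(Finset.range c) : Set ℕ).ncard := Set.ncard_image_le (Finset.range c).finite_toSet
              _ = c := by rw [Set.ncard_coe_finset, Finset.card_range]
          · calc T.ncard = ((Quotient.out : G ⧸ K → G) '' Set.univ).ncard := by
                  rw [hT, Set.image_univ]
              _ ≤ (Set.univ : Set (G ⧸ K)).ncard := Set.ncard_image_le Set.finite_univ
              _ = qq := by rw [Set.ncard_univ]
  -- key arithmetic facts
  have hdk : s + 1 ≤ d * k := by
    have h1 : d * k = d * (s / d) + d := by rw [hkdef, Nat.mul_add, Nat.mul_one]
    have h2 : d * (s / d) + s % d = s := Nat.div_add_mod s d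
    have h3 : s % d < d := Nat.mod_lt _ (by omega)
    omega
  have hdk2s : d * k ≤ 2 * s := by
    have h1 : d * k = d * (s / d) + d := by rw [hkdef, Nat.mul_add, Nat.mul_one]
    have h2 : d * (s / d) + s % d = s := Nat.div_add_mod s d
    omega
  have hck : c * k ≤ p - 1 + k := by
    have h1 : c * k = ((p - 1) / k) * k + k := by rw [hcdef, Nat.add_mul, Nat.one_mul]
    have h2 : (p - 1) / k * k ≤ p - 1 := Nat.div_mul_le_self _ _
    omega
  -- real arithmetic
  have hreal1 : (S₁.ncard : ℝ) ≤ 2 * Real.sqrt n := by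
    have h1 : (S₁.ncard : ℝ) ≤ (2 * s : ℕ) := by exact_mod_cast le_trans hcard1 hdk2s
    calc (S₁.ncard : ℝ) ≤ ((2 * s : ℕ) : ℝ) := h1
      _ = 2 * (s : ℝ) := by push_cast; ring
      _ ≤ 2 * Real.sqrt n := by
          have := Real.nat_sqrt_le_real_sqrt (a := n)
          linarith
  have hreal2 : (S₂.ncard : ℝ) ≤ 2 * Real.sqrt n := by
    set S : ℝ := Real.sqrt n with hSdef
    have hS2 : S * S = n := Real.mul_self_sqrt (by positivity)
    have hSlt : S < (s : ℝ) + 1 := by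
      rw [hSdef, Real.sqrt_lt' (by positivity)]
      have h' : (n : ℝ) < ((s : ℝ) + 1) ^ 2 := by
        rw [pow_two]
        exact_mod_cast Nat.lt_succ_sqrt n
      exact h'
    have hcardle : (S₂.ncard : ℝ) ≤ (c : ℝ) * qq := by exact_mod_cast hcard2
    have hckR : (c : ℝ) * k ≤ (p : ℝ) - 1 + k := by
      have h1 : ((c * k : ℕ) : ℝ) ≤ ((p - 1 + k : ℕ) : ℝ) := Nat.cast_le.mpr hck
      rw [Nat.cast_add, Nat.cast_sub (show 1 ≤ p by omega), Nat.cast_mul] at h1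
      push_cast at h1 ⊢
      linarith
    have hqnR : (qq : ℝ) * ((d : ℝ) * p) = n := by exact_mod_cast hqn
    have hdkR : (s : ℝ) + 1 ≤ (d : ℝ) * k := by exact_mod_cast hdk
    have hdpR : (s : ℝ) + 1 ≤ (d : ℝ) * p := by exact_mod_cast hsp
    have hd1R : (1 : ℝ) ≤ d := by exact_mod_cast hd1
    have hk1R : (1 : ℝ) ≤ k := by exact_mod_cast hk1
    have hq1R : (1 : ℝ) ≤ qq := by exact_mod_cast hqq1
    have hc1R : (1 : ℝ) ≤ c := by exact_mod_cast (show 1 ≤ c from Nat.succ_le_succ (Nat.zero_le _))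
    -- qq < S
    have hSdp : S < (d : ℝ) * p := lt_of_lt_of_le hSlt hdpR
    have hqS : (qq : ℝ) < S := by
      have h1 : (qq : ℝ) * S < (qq : ℝ) * ((d : ℝ) * p) :=
        mul_lt_mul_of_pos_left hSdp (by linarith)
      rw [hqnR, ← hS2] at h1
      exact (mul_lt_mul_iff_left₀ hSpos).mp h1
    -- main bound
    have hdk0 : (0 : ℝ) < (d : ℝ) * k := by positivity
    have hSdk : S < (d : ℝ) * k := lt_of_lt_of_le hSlt hdkR
    have key : (c : ℝ) * qq * ((d : ℝ) * k) < 2 * S * ((d : ℝ) * k) := by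
      have e1 : (c : ℝ) * qq * ((d : ℝ) * k) = ((c : ℝ) * k) * ((qq : ℝ) * d) := by ring
      have e2 : ((c : ℝ) * k) * ((qq : ℝ) * d) ≤ ((p : ℝ) - 1 + k) * ((qq : ℝ) * d) :=
        mul_le_mul_of_nonneg_right hckR (by positivity)
      have e3 : ((p : ℝ) - 1 + k) * ((qq : ℝ) * d)
          = ((qq : ℝ) * ((d : ℝ) * p)) - (qq : ℝ) * d + (k : ℝ) * ((qq : ℝ) * d) := by ring
      have e5 : (n : ℝ) < S * ((d : ℝ) * k) := by
        rw [← hS2]; exact mul_lt_mul_of_pos_left hSdk hSpos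
      have e6 : (k : ℝ) * ((qq : ℝ) * d) < S * ((d : ℝ) * k) := by
        have e : (k : ℝ) * ((qq : ℝ) * d) = (qq : ℝ) * ((d : ℝ) * k) := by ring
        rw [e]
        exact mul_lt_mul_of_pos_right hqS hdk0
      have e7 : (0 : ℝ) ≤ (qq : ℝ) * d := by positivity
      rw [e1]
      calc ((c : ℝ) * k) * ((qq : ℝ) * d) ≤ ((p : ℝ) - 1 + k) * ((qq : ℝ) * d) := e2
        _ = ((qq : ℝ) * ((d : ℝ) * p)) - (qq : ℝ) * d + (k : ℝ) * ((qq : ℝ) * d) := e3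
        _ = (n : ℝ) - (qq : ℝ) * d + (k : ℝ) * ((qq : ℝ) * d) := by rw [hqnR]
        _ < 2 * S * ((d : ℝ) * k) := by linarith
    have hmain : (c : ℝ) * qq ≤ 2 * S := le_of_lt ((mul_lt_mul_iff_left₀ hdk0).mp key)
    linarith
  refine ⟨S₁, S₂, hreal1, hreal2, ?_⟩
  -- coverage
  apply Set.eq_univ_of_forall
  intro g
  set q : G ⧸ K := QuotientAddGroup.mk g with hq
  have hgq : g - q.out ∈ K := by
    rw [← QuotientAddGroup.eq_iff_sub_mem]
    rw [hq, QuotientAddGroup.out_eq']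
  set y : K := ⟨g - q.out, hgq⟩ with hy
  obtain ⟨i, hi, j, hj, hmem⟩ := hcover y
  set h : K := y - (i • x + j • (k • x)) with hh
  have hdecomp : g = (((h : K) : G) + i • xG) + (j • (k • xG) + q.out) := by
    rw [hh]
    simp only [hy, AddSubgroup.coe_sub, AddSubgroup.coe_add, AddSubgroup.coe_nsmul, ← hxG]
    abel
  rw [hdecomp]
  apply Set.add_mem_add
  · apply Set.add_mem_add
    · exact ⟨h, hmem, rfl⟩
    · exact ⟨i, by simpa using hi, rfl⟩
  · apply Set.add_mem_add
    · exact ⟨j, by simpa using hj, rfl⟩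
    · exact ⟨q, rfl⟩
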